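/- If a monotone gridding matrix M has a consistent orientation, then so does any matrix obtained from M by applying further column reversals and row complementations; moreover, a k × ℓ monotone gridding matrix M has a consistent orientation if and only if every cycle in the bipartite 'sign graph' (with vertices the rows and columns, and an edge between row j and column i for each nonempty entry M_{i,j}, labeled +1 for Inc and -1 for Dec) has an even number of -1 labels. -/

import Mathlib

/-- A monotone gridding matrix with `k` columns and `ℓ` rows (rows numbered bottom to
top): entry `none` is empty, `some true` is the class Inc, `some false` is Dec.
`M i j` is the entry in column `i`, row `j`. -/
abbrev GMatrix (k ℓ : ℕ) := Fin k → Fin ℓ → Option Bool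

/-- The cell graph of a gridding matrix: the nonempty entries are the (effective)
vertices; two nonempty entries are adjacent if they share a row or a column and no
nonempty entry lies strictly between them. -/
def cellGraph {k ℓ : ℕ} (M : GMatrix k ℓ) : SimpleGraph (Fin k × Fin ℓ) :=
  SimpleGraph.fromRel (fun x y =>
    M x.1 x.2 ≠ none ∧ M y.1 y.2 ≠ none ∧
    ((x.1 = y.1 ∧ x.2 < y.2 ∧ ∀ j, x.2 < j → j < y.2 → M x.1 j = none) ∨
     (x.2 = y.2 ∧ x.1 < y.1 ∧ ∀ i, x.1 < i → i < y.1 → M i x.2 = none)))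

/-- `M` has a consistent orientation: sign functions on columns and rows such that a
nonempty entry is Inc exactly when its column sign and row sign agree. -/
def HasConsistentOrientation {k ℓ : ℕ} (M : GMatrix k ℓ) : Prop :=
  ∃ (fc : Fin k → Bool) (fr : Fin ℓ → Bool),
    ∀ (i : Fin k) (j : Fin ℓ) (b : Bool), M i j = some b → (b = true ↔ fc i = fr j)

/-- Apply column reversals (for columns `i` with `flipC i = true`) and row
complementations (for rows `j` with `flipR j = true`) to `M`: each such operation
swaps Inc and Dec in the corresponding column or row. -/
def applyFlips {k ℓ : ℕ} (M : GMatrix k ℓ) (flipC : Fin k → Bool) (flipR : Fin ℓ → Bool) :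
    GMatrix k ℓ :=
  fun i j => (M i j).map (fun b => xor (xor b (flipC i)) (flipR j))

/-- Every cycle of the bipartite sign graph (vertices: rows and columns; one edge per
nonempty entry, labeled `-1` for Dec) carries an even number of `-1` labels.  A cycle
is given by distinct columns `ci 0, …, ci (m+1)` and distinct rows `rj 0, …, rj (m+1)`
with the edges `(ci t, rj t)` and `(ci (t+1), rj t)` (cyclically) all present. -/
def SignGraphCyclesEven {k ℓ : ℕ} (M : GMatrix k ℓ) : Prop :=
  ∀ m : ℕ, ∀ (ci : Fin (m + 2) → Fin k) (rj : Fin (m + 2) → Fin ℓ),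
    Function.Injective ci → Function.Injective rj →
    (∀ t, M (ci t) (rj t) ≠ none ∧ M (ci (t + 1)) (rj t) ≠ none) →
    Even ((Finset.univ.filter (fun t => M (ci t) (rj t) = some false)).card +
      (Finset.univ.filter (fun t => M (ci (t + 1)) (rj t) = some false)).card)


open Function Sum Finset




private def bgraph {k ℓ : ℕ} (M : GMatrix k ℓ) : SimpleGraph (Fin k ⊕ Fin ℓ) where
  Adj u v := (∃ i j, u = inl i ∧ v = inr j ∧ M i j ≠ none) ∨
             (∃ i j, u = inr j ∧ v = inl i ∧ M i j ≠ none)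
  symm := by
    constructor
    rintro u v (⟨i, j, rfl, rfl, h⟩ | ⟨i, j, rfl, rfl, h⟩)
    · exact Or.inr ⟨i, j, rfl, rfl, h⟩
    · exact Or.inl ⟨i, j, rfl, rfl, h⟩
  loopless := by
    constructor
    rintro u (⟨i, j, rfl, h, _⟩ | ⟨i, j, rfl, h, _⟩) <;> simp at h

private lemma bgraph_adj_inl_inr {k ℓ : ℕ} {M : GMatrix k ℓ} {i : Fin k} {j : Fin ℓ} :
    (bgraph M).Adj (inl i) (inr j) ↔ M i j ≠ none := by
  constructor
  · rintro (⟨i', j', hi, hj, h⟩ | ⟨i', j', hi, hj, h⟩)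
    · cases hi; cases hj; exact h
    · simp at hi
  · intro h; exact Or.inl ⟨i, j, rfl, rfl, h⟩

private lemma extract {k ℓ : ℕ} (M : GMatrix k ℓ) :
    ∀ (N : ℕ) (c : Fin k) (r : Fin ℓ) (p : (bgraph M).Walk (inl c) (inr r)),
    p.length ≤ N → p.IsPath →
    ∃ (n : ℕ) (cs : Fin (n+1) → Fin k) (rs : Fin (n+1) → Fin ℓ),
      Injective cs ∧ Injective rs ∧ cs 0 = c ∧ rs (Fin.last n) = r ∧
      (∀ t, inl (cs t) ∈ p.support) ∧ (∀ t, inr (rs t) ∈ p.support) ∧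
      (∀ t, M (cs t) (rs t) ≠ none) ∧
      (∀ t : Fin n, M (cs t.succ) (rs t.castSucc) ≠ none) := by
  intro N
  induction N with
  | zero =>
    intro c r p hlen _
    cases p with
    | cons h q => simp at hlen
  | succ N ih =>
    intro c r p hlen hpath
    cases p with
    | cons h q =>
      rename_i w
      obtain (⟨i', j', hic, rfl, hne⟩ | ⟨i', j', hic, -, -⟩) := h
      on_goal 2 => exact absurd hic (by simp)
      rw [inl.injEq] at hic; subst hic
      cases q with
      | nil =>
        refine ⟨0, fun _ => c, fun _ => r, ?_, ?_, rfl, rfl, ?_, ?_, ?_, ?_⟩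
        · intro a b _; exact Fin.ext (by omega)
        · intro a b _; exact Fin.ext (by omega)
        · intro t; simp
        · intro t; simp
        · intro t; exact hne
        · exact fun t => t.elim0
      | cons h2 q2 =>
        rename_i w2
        obtain (⟨i2, j2, hi2, -, -⟩ | ⟨i2, j2, hi2, rfl, hne2⟩) := h2
        on_goal 1 => exact absurd hi2 (by simp)
        rw [inr.injEq] at hi2; subst hi2
        have hq2path : q2.IsPath := (hpath.of_cons).of_cons
        have hq2len : q2.length ≤ N := by
          change q2.length + 1 + 1 ≤ N + 1 at hlen; omega
        obtain ⟨n, cs', rs', hicv, hirv, hc0, hrl, hmemc, hmemr, hf, hs⟩ :=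
          ih i2 r q2 hq2len hq2path
        have hnotin_c : inl c ∉ (SimpleGraph.Walk.cons
            (show (bgraph M).Adj (inr j') (inl i2) from Or.inr ⟨i2, j', rfl, rfl, hne2⟩)
            q2).support := by
          have := hpath.support_nodup
          change List.Nodup (inl c :: (SimpleGraph.Walk.cons
            (show (bgraph M).Adj (inr j') (inl i2) from Or.inr ⟨i2, j', rfl, rfl, hne2⟩)
            q2).support) at this
          exact (List.nodup_cons.mp this).1
        have hnotin_r : inr j' ∉ q2.support := by
          have := (hpath.of_cons).support_nodup
          change List.Nodup (inr j' :: q2.support) at this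
          exact (List.nodup_cons.mp this).1
        refine ⟨n + 1, Fin.cons c cs', Fin.cons j' rs', ?_, ?_, ?_, ?_, ?_, ?_, ?_, ?_⟩
        · rw [Fin.cons_injective_iff]
          refine ⟨?_, hicv⟩
          rintro ⟨t, ht⟩
          apply hnotin_c
          rw [SimpleGraph.Walk.support_cons]
          exact List.mem_cons_of_mem _ (ht ▸ hmemc t)
        · rw [Fin.cons_injective_iff]
          refine ⟨?_, hirv⟩
          rintro ⟨t, ht⟩
          exact hnotin_r (ht ▸ hmemr t)
        · simp
        · rw [← Fin.succ_last, Fin.cons_succ]; exact hrl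
        · intro t
          refine Fin.cases ?_ ?_ t
          · simp [SimpleGraph.Walk.support_cons]
          · intro s
            rw [Fin.cons_succ]
            change inl (cs' s) ∈ inl c :: inr j' :: q2.support
            simp only [List.mem_cons]
            exact Or.inr (Or.inr (hmemc s))
        · intro t
          refine Fin.cases ?_ ?_ t
          · simp [SimpleGraph.Walk.support_cons]
            change inr j' ∈ inl c :: inr j' :: q2.support
            exact List.mem_cons_of_mem _ (List.mem_cons.2 (Or.inl rfl))
          · intro s
            rw [Fin.cons_succ]
            change inr (rs' s) ∈ inl c :: inr j' :: q2.support
            simp only [List.mem_cons]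
            exact Or.inr (Or.inr (hmemr s))
        · intro t
          refine Fin.cases ?_ ?_ t
          · simpa using hne
          · intro s
            rw [Fin.cons_succ, Fin.cons_succ]
            exact hf s
        · intro t
          refine Fin.cases ?_ ?_ t
          · rw [show ((0 : Fin (n+1)).succ) = Fin.succ 0 from rfl, Fin.cons_succ,
              Fin.castSucc_zero, Fin.cons_zero]
            exact hc0 ▸ hne2
          · intro s
            rw [Fin.cons_succ, ← Fin.succ_castSucc, Fin.cons_succ]
            exact hs s




private def eb (b : Bool) : ZMod 2 := if b then 1 else 0

private lemma even_iff_cast_zero (n : ℕ) : Even n ↔ (n : ZMod 2) = 0 := by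
  rw [ZMod.natCast_eq_zero_iff]
  exact even_iff_two_dvd

private lemma entry_val {k ℓ : ℕ} (M : GMatrix k ℓ) (fc : Fin k → Bool) (fr : Fin ℓ → Bool)
    (hor : ∀ i j b, M i j = some b → (b = true ↔ fc i = fr j))
    {i : Fin k} {j : Fin ℓ} (h : M i j ≠ none) :
    (if M i j = some false then (1 : ZMod 2) else 0) = eb (fc i) + eb (fr j) := by
  obtain ⟨b, hb⟩ := Option.ne_none_iff_exists'.mp h
  have h2 := hor i j b hb
  rw [hb]
  cases b <;> cases hfc : fc i <;> cases hfr : fr j <;> simp_all [eb] <;> decide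

private lemma cycle_sum {k ℓ : ℕ} (M : GMatrix k ℓ) (fc : Fin k → Bool) (fr : Fin ℓ → Bool)
    (n : ℕ) (cs : Fin (n+1) → Fin k) (rs : Fin (n+1) → Fin ℓ)
    (h1 : ∀ t, (if M (cs t) (rs t) = some false then (1 : ZMod 2) else 0)
        = eb (fc (cs t)) + eb (fr (rs t)))
    (h2 : ∀ t : Fin n, (if M (cs t.succ) (rs t.castSucc) = some false then (1 : ZMod 2) else 0)
        = eb (fc (cs t.succ)) + eb (fr (rs t.castSucc))) :
    (((Finset.univ.filter (fun t => M (cs t) (rs t) = some false)).card +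
      (Finset.univ.filter (fun t => M (cs (t + 1)) (rs t) = some false)).card : ℕ) : ZMod 2)
    = (if M (cs 0) (rs (Fin.last n)) = some false then 1 else 0)
      + eb (fc (cs 0)) + eb (fr (rs (Fin.last n))) := by
  have hcast : ∀ (p : Fin (n+1) → Prop) (_ : DecidablePred p),
      (((Finset.univ.filter p).card : ℕ) : ZMod 2) = ∑ t, if p t then 1 else 0 := by
    intro p hp
    rw [Finset.card_filter]
    push_cast
    simp
  push_cast
  rw [hcast _ _, hcast _ _]
  have hS1 : (∑ t, if M (cs t) (rs t) = some false then (1 : ZMod 2) else 0)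
      = (∑ t, eb (fc (cs t))) + (∑ t, eb (fr (rs t))) := by
    rw [← Finset.sum_add_distrib]
    exact Finset.sum_congr rfl fun t _ => h1 t
  have hS2 : (∑ t, if M (cs (t + 1)) (rs t) = some false then (1 : ZMod 2) else 0)
      = ((∑ t : Fin n, eb (fc (cs t.succ))) + (∑ t : Fin n, eb (fr (rs t.castSucc))))
        + (if M (cs 0) (rs (Fin.last n)) = some false then 1 else 0) := by
    rw [Fin.sum_univ_castSucc]
    congr 1
    · rw [← Finset.sum_add_distrib]
      refine Finset.sum_congr rfl fun t _ => ?_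
      rw [Fin.coeSucc_eq_succ]
      exact h2 t
    · rw [Fin.last_add_one]
  rw [hS1, hS2]
  rw [Fin.sum_univ_succ (fun t => eb (fc (cs t))), Fin.sum_univ_castSucc (fun t => eb (fr (rs t)))]
  have h2z : (2 : ZMod 2) = 0 := rfl
  linear_combination (∑ t : Fin n, eb (fc (cs t.succ))) * h2z
    + (∑ t : Fin n, eb (fr (rs t.castSucc))) * h2z


private lemma forward_dir {k ℓ : ℕ} (M : GMatrix k ℓ) (h : HasConsistentOrientation M) :
    SignGraphCyclesEven M := by
  obtain ⟨fc, fr, hor⟩ := h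
  intro m ci rj _ _ hedge
  rw [even_iff_cast_zero]
  have hclose : M (ci 0) (rj (Fin.last (m+1))) ≠ none := by
    have := (hedge (Fin.last (m+1))).2
    rwa [Fin.last_add_one] at this
  rw [cycle_sum M fc fr (m+1) ci rj
    (fun t => entry_val M fc fr hor (hedge t).1)
    (fun t => by
      have := (hedge t.castSucc).2
      rw [Fin.coeSucc_eq_succ] at this
      exact entry_val M fc fr hor this)]
  rw [entry_val M fc fr hor hclose]
  have : ∀ x y : ZMod 2, x + y + x + y = 0 := by decide
  exact this _ _

private lemma main_ind {k ℓ : ℕ} : ∀ (N : ℕ) (M : GMatrix k ℓ),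
    (Finset.univ.filter (fun p : Fin k × Fin ℓ => M p.1 p.2 ≠ none)).card ≤ N →
    SignGraphCyclesEven M → HasConsistentOrientation M := by
  intro N
  induction N with
  | zero =>
    intro M hcard _
    refine ⟨fun _ => true, fun _ => true, fun i j b hb => ?_⟩
    have : (i, j) ∈ Finset.univ.filter (fun p : Fin k × Fin ℓ => M p.1 p.2 ≠ none) := by
      simp [hb]
    rw [Finset.card_eq_zero.mp (Nat.le_zero.mp hcard)] at this
    simp at this
  | succ N ih =>
    intro M hcard hcyc
    by_cases hE : ∀ i j, M i j = none
    · refine ⟨fun _ => true, fun _ => true, fun i j b hb => ?_⟩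
      rw [hE i j] at hb; simp at hb
    · push_neg at hE
      obtain ⟨i0, j0, h0⟩ := hE
      obtain ⟨b0, hb0⟩ := Option.ne_none_iff_exists'.mp h0
      set M' : GMatrix k ℓ := fun i j => if i = i0 ∧ j = j0 then none else M i j with hM'
      have hM'none : M' i0 j0 = none := by simp [hM']
      have hM'eq : ∀ i j, M' i j ≠ none → M' i j = M i j := by
        intro i j h
        by_cases hij : i = i0 ∧ j = j0
        · exact absurd (by simp [hM', hij]) h
        · simp [hM', hij]
      -- card decreases
      have hsub : Finset.univ.filter (fun p : Fin k × Fin ℓ => M' p.1 p.2 ≠ none) ⊂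
          Finset.univ.filter (fun p : Fin k × Fin ℓ => M p.1 p.2 ≠ none) := by
        constructor
        · intro p hp
          simp only [Finset.mem_filter, Finset.mem_univ, true_and] at hp ⊢
          rw [← hM'eq p.1 p.2 hp]; exact hp
        · intro hsup
          have : (i0, j0) ∈ Finset.univ.filter (fun p : Fin k × Fin ℓ => M' p.1 p.2 ≠ none) :=
            hsup (by simp [h0])
          simp [hM'none] at this
      have hcard' : (Finset.univ.filter (fun p : Fin k × Fin ℓ => M' p.1 p.2 ≠ none)).card ≤ N :=
        by have := Finset.card_lt_card hsub; omega
      -- cycle condition transfers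
      have hcyc' : SignGraphCyclesEven M' := by
        intro m ci rj hci hrj hedge
        have e1 : ∀ t, M' (ci t) (rj t) = M (ci t) (rj t) :=
          fun t => hM'eq _ _ (hedge t).1
        have e2 : ∀ t, M' (ci (t+1)) (rj t) = M (ci (t+1)) (rj t) :=
          fun t => hM'eq _ _ (hedge t).2
        have := hcyc m ci rj hci hrj (fun t => ⟨e1 t ▸ (hedge t).1, e2 t ▸ (hedge t).2⟩)
        convert this using 3
        · exact Finset.filter_congr fun t _ => by rw [e1 t]
        · exact Finset.filter_congr fun t _ => by rw [e2 t]
      obtain ⟨fc', fr', hor'⟩ := ih M' hcard' hcyc'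
      -- reachability implies consistency at the removed edge
      have hreach_cons : (bgraph M').Reachable (inl i0) (inr j0) →
          (b0 = true ↔ fc' i0 = fr' j0) := by
        intro hre
        classical
        obtain ⟨p0⟩ := hre
        set p := p0.toPath with hp
        obtain ⟨n, cs, rs, hcinj, hrinj, hc0, hrl, _, _, hf, hs⟩ :=
          extract M' p.1.length i0 j0 p.1 le_rfl p.2
        -- n ≥ 1
        obtain (rfl | ⟨m, rfl⟩) : n = 0 ∨ ∃ m, n = m + 1 := by
          cases n with
          | zero => exact Or.inl rfl
          | succ m => exact Or.inr ⟨m, rfl⟩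
        · exfalso
          apply hf 0
          have : rs 0 = j0 := by rw [← hrl]; rfl
          rw [hc0, this, hM'none]
        · -- build the cycle in M
          have hfM : ∀ t, M (cs t) (rs t) ≠ none := fun t => (hM'eq _ _ (hf t)) ▸ hf t
          have hsM : ∀ t : Fin (m+1), M (cs t.succ) (rs t.castSucc) ≠ none :=
            fun t => (hM'eq _ _ (hs t)) ▸ hs t
          have hedges : ∀ t, M (cs t) (rs t) ≠ none ∧ M (cs (t+1)) (rs t) ≠ none := by
            intro t
            refine ⟨hfM t, ?_⟩
            refine Fin.lastCases ?_ ?_ t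
            · rw [Fin.last_add_one, hc0, hrl, hb0]
              simp
            · intro s
              rw [Fin.coeSucc_eq_succ]
              exact hsM s
          have heven := hcyc m cs rs hcinj hrinj hedges
          rw [even_iff_cast_zero] at heven
          rw [cycle_sum M fc' fr' (m+1) cs rs
            (fun t => by
              rw [show M (cs t) (rs t) = M' (cs t) (rs t) from (hM'eq _ _ (hf t)).symm]
              exact entry_val M' fc' fr' hor' (hf t))
            (fun t => by
              rw [show M (cs t.succ) (rs t.castSucc) = M' (cs t.succ) (rs t.castSucc) from
                (hM'eq _ _ (hs t)).symm]
              exact entry_val M' fc' fr' hor' (hs t))] at heven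
          rw [hc0, hrl, hb0] at heven
          cases b0 <;> cases hfc : fc' i0 <;> cases hfr : fr' j0 <;>
            simp_all [eb] <;> simp_all [show ((1:ZMod 2) + 1 + 1 = 1) from rfl] <;> decide
      by_cases hcons : b0 = true ↔ fc' i0 = fr' j0
      · refine ⟨fc', fr', fun i j b hb => ?_⟩
        by_cases hij : i = i0 ∧ j = j0
        · obtain ⟨rfl, rfl⟩ := hij
          rw [hb0] at hb
          cases hb
          exact hcons
        · exact hor' i j b (by simpa [hM', hij] using hb)
      · have hnre : ¬ (bgraph M').Reachable (inl i0) (inr j0) := fun h => hcons (hreach_cons h)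
        classical
        refine ⟨fun i => if (bgraph M').Reachable (inl i0) (inl i) then !(fc' i) else fc' i,
                fun j => if (bgraph M').Reachable (inl i0) (inr j) then !(fr' j) else fr' j,
                fun i j b hb => ?_⟩
        by_cases hij : i = i0 ∧ j = j0
        · obtain ⟨rfl, rfl⟩ := hij
          rw [hb0] at hb; cases hb
          beta_reduce
          rw [if_pos (SimpleGraph.Reachable.refl _), if_neg hnre]
          cases b0 <;> cases hfc : fc' i <;> cases hfr : fr' j <;> simp_all
        · have hMij : M' i j = some b := by simpa [hM', hij] using hb
          have hadj : (bgraph M').Adj (inl i) (inr j) :=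
            bgraph_adj_inl_inr.mpr (by rw [hMij]; simp)
          have hiff : (bgraph M').Reachable (inl i0) (inl i) ↔
              (bgraph M').Reachable (inl i0) (inr j) :=
            ⟨fun h => h.trans hadj.reachable, fun h => h.trans hadj.symm.reachable⟩
          have horb := hor' i j b hMij
          by_cases hri : (bgraph M').Reachable (inl i0) (inl i)
          · beta_reduce
            rw [if_pos hri, if_pos (hiff.mp hri)]
            rw [horb]
            cases fc' i <;> cases fr' j <;> simp
          · beta_reduce
            rw [if_neg hri, if_neg (fun h => hri (hiff.mpr h))]
            exact horb

/-- If `M` has a consistent orientation then so does any matrix obtained from it by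
column reversals and row complementations; moreover `M` has a consistent orientation
iff every cycle of its bipartite sign graph has an even number of `-1` (Dec) labels. -/
theorem consistentOrientation_flips_and_iff {k ℓ : ℕ} (M : GMatrix k ℓ) :
    (∀ (flipC : Fin k → Bool) (flipR : Fin ℓ → Bool),
      HasConsistentOrientation M → HasConsistentOrientation (applyFlips M flipC flipR)) ∧
    (HasConsistentOrientation M ↔ SignGraphCyclesEven M) := by
  constructor
  · rintro flipC flipR ⟨fc, fr, hor⟩
    refine ⟨fun i => xor (fc i) (flipC i), fun j => xor (fr j) (flipR j), fun i j b' hb' => ?_⟩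
    obtain ⟨b, hb, hxb⟩ := Option.map_eq_some_iff.mp hb'
    have h := hor i j b hb
    subst hxb
    cases b <;> cases hfc : fc i <;> cases hfr : fr j <;>
      cases hC : flipC i <;> cases hR : flipR j <;> simp_all
  · constructor
    · exact forward_dir M
    · exact main_ind _ M le_rfl
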